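/- arXiv:0711.3865 — 7 statements merged into one kernel-verified Lean document; each statement's English description precedes it below -/
import Mathlib

section
/- Let K be a perfect field of characteristic p > 0 and let L be a field extension of K of transcendence degree 1 over K. If L is not perfect, then [L : L^p] = p, where L^p denotes the image of L under the Frobenius map x ↦ x^p. -/
open IntermediateField Polynomial Module
set_option maxHeartbeats 1600000
set_option synthInstance.maxHeartbeats 400000

private theorem card_le_aux (p : ℕ) [Fact p.Prime] {K L : Type*} [Field K] [Field L]
    [Algebra K L] [CharP K p] [CharP L p] [PerfectRing K p] {t : L}
    (halg : Algebra.IsAlgebraic ↥(IntermediateField.adjoin K {t}) L) (s : Finset L)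
    (hind : LinearIndependent ↥((frobenius L p).fieldRange) (fun i : s => (i : L))) :
    s.card ≤ p := by
  let F : Subfield L := (frobenius L p).fieldRange
  let k0 : IntermediateField K L := IntermediateField.adjoin K {t ^ p}
  let k1 : IntermediateField ↥k0 L := IntermediateField.adjoin ↥k0 {t}
  have h1 : t ∈ k1 := IntermediateField.subset_adjoin _ _ rfl
  have h2 : ∀ c : K, algebraMap K L c ∈ k1 := by
    intro c
    have h0 : algebraMap K L c ∈ k0 := IntermediateField.algebraMap_mem _ c
    have := k1.algebraMap_mem (⟨_, h0⟩ : ↥k0)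
    simpa using this
  -- every element of k0 is a p-th power of an element of k1
  have hk0k1p : ∀ x ∈ k0, ∃ e ∈ k1, e ^ p = x := by
    intro x hx
    let S : Subfield L := Subfield.map (frobenius L p) k1.toSubfield
    have hKS : ∀ c : K, algebraMap K L c ∈ S := by
      intro c
      obtain ⟨d, hd⟩ := (frobeniusEquiv K p).surjective c
      exact ⟨algebraMap K L d, h2 d, by simp [← hd, frobenius_def, map_pow]⟩
    have hle : k0 ≤ S.toIntermediateField hKS := by
      rw [IntermediateField.adjoin_le_iff]
      rintro y rfl
      exact ⟨t, h1, by simp [frobenius_def]⟩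
    obtain ⟨e, he, he2⟩ := hle hx
    exact ⟨e, he, by simpa [frobenius_def] using he2⟩
  -- k0 is contained in F
  have hk0F : ∀ x ∈ k0, x ∈ F := by
    intro x hx
    have hKF : ∀ c : K, algebraMap K L c ∈ F := by
      intro c
      obtain ⟨d, hd⟩ := (frobeniusEquiv K p).surjective c
      exact ⟨algebraMap K L d, by simp [← hd, frobenius_def, map_pow]⟩
    have hle : k0 ≤ F.toIntermediateField hKF := by
      rw [IntermediateField.adjoin_le_iff]
      rintro y rfl
      exact ⟨t, by simp [frobenius_def]⟩
    exact hle hx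
  -- integrality of everything over k1
  have hL1 : ∀ x : L, IsIntegral ↥k1 x := by
    intro x
    obtain ⟨P, hP, hPx⟩ := halg.isAlgebraic x
    have hsub : (IntermediateField.adjoin K {t}).toSubfield ≤ k1.toSubfield := by
      have : IntermediateField.adjoin K {t} ≤ k1.restrictScalars K := by
        rw [IntermediateField.adjoin_le_iff]
        rintro y rfl
        exact h1
      exact this
    let ρ : ↥(IntermediateField.adjoin K {t}).toSubfield →+* ↥k1.toSubfield :=
      Subfield.inclusion hsub
    have hinj : Function.Injective ρ := fun a b h =>
      Subtype.ext (congrArg Subtype.val h : _)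
    have hcomp : (algebraMap ↥k1 L).comp ρ = algebraMap ↥(IntermediateField.adjoin K {t}) L :=
      RingHom.ext fun y => rfl
    refine IsAlgebraic.isIntegral ⟨P.map ρ, ?_, ?_⟩
    · exact (Polynomial.map_ne_zero_iff hinj).mpr hP
    · rw [Polynomial.aeval_def, Polynomial.eval₂_map, hcomp]
      exact hPx
  -- t integral over k0 and finrank bound
  have htp : t ^ p ∈ k0 := IntermediateField.subset_adjoin _ _ rfl
  have hq : (Polynomial.aeval t) (X ^ p - C (⟨t ^ p, htp⟩ : ↥k0) : Polynomial ↥k0) = 0 := by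
    simp [IntermediateField.algebraMap_apply]
  have hmq : (X ^ p - C (⟨t ^ p, htp⟩ : ↥k0) : Polynomial ↥k0).Monic :=
    Polynomial.monic_X_pow_sub_C _ (Fact.out : p.Prime).ne_zero
  have hti : IsIntegral ↥k0 t := ⟨_, hmq, hq⟩
  have hfd01 : FiniteDimensional ↥k0 ↥k1 :=
    IntermediateField.finiteDimensional_adjoin
      (fun x hx => by rw [Set.mem_singleton_iff] at hx; exact hx ▸ hti)
  have hk01 : finrank ↥k0 ↥k1 ≤ p := by
    have heq := IntermediateField.adjoin.finrank hti
    have hdvd : minpoly ↥k0 t ∣ X ^ p - C (⟨t ^ p, htp⟩ : ↥k0) := minpoly.dvd _ _ hq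
    have hle := Polynomial.natDegree_le_of_dvd hdvd hmq.ne_zero
    rw [Polynomial.natDegree_X_pow_sub_C] at hle
    calc finrank ↥k0 ↥k1 = (minpoly ↥k0 t).natDegree := heq
    _ ≤ p := hle
  -- the finitely generated field M
  let M : IntermediateField ↥k1 L := IntermediateField.adjoin ↥k1 ↑s
  have hfdM : FiniteDimensional ↥k1 ↥M :=
    IntermediateField.finiteDimensional_adjoin (fun x _ => hL1 x)
  set n := finrank ↥k1 ↥M with hn_def
  let B : Basis (Fin n) ↥k1 ↥M := Module.finBasis ↥k1 ↥M
  have hBL : LinearIndependent ↥k1 (fun i : Fin n => ((B i : ↥M) : L)) := by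
    have := B.linearIndependent.map' M.val.toLinearMap (by
      rw [LinearMap.ker_eq_bot]
      exact Subtype.val_injective)
    exact this
  -- the big family is linearly independent over k0
  have hbig : LinearIndependent ↥k0
      (fun ji : s × Fin n => ((ji.1 : L) * ((B ji.2 : ↥M) : L) ^ p)) := by
    rw [Fintype.linearIndependent_iff]
    intro g hg
    choose e he1 he2 using fun ji : s × Fin n => hk0k1p ↑(g ji) (g ji).2
    have hdF : ∀ j : s, (∑ i, ((g (j, i) : L) * ((B i : ↥M) : L) ^ p)) ∈ F := by
      intro j
      refine Subfield.sum_mem _ fun i _ => Subfield.mul_mem _ (hk0F _ (g (j, i)).2) ?_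
      exact ⟨((B i : ↥M) : L), by simp [frobenius_def]⟩
    have hg' : ∑ j : s, (⟨_, hdF j⟩ : ↥F) • (j : L) = 0 := by
      rw [← hg, Fintype.sum_prod_type]
      refine Finset.sum_congr rfl fun j _ => ?_
      have : (⟨_, hdF j⟩ : ↥F) • (j : L) = (∑ i, ((g (j, i) : L) * ((B i : ↥M) : L) ^ p)) * (j : L) := rfl
      rw [this, Finset.sum_mul]
      refine Finset.sum_congr rfl fun i _ => ?_
      have : g (j, i) • ((j : L) * ((B i : ↥M) : L) ^ p) = (g (j, i) : L) * ((j : L) * ((B i : ↥M) : L) ^ p) := by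
        rw [Algebra.smul_def]; rfl
      rw [this]; ring
    have hd0 : ∀ j : s, (∑ i, ((g (j, i) : L) * ((B i : ↥M) : L) ^ p)) = 0 := by
      intro j
      have := Fintype.linearIndependent_iff.mp hind _ hg' j
      exact congrArg Subtype.val this
    rintro ⟨j, i⟩
    have h7 : (∑ i, e (j, i) * ((B i : ↥M) : L)) ^ p = 0 := by
      rw [sum_pow_char]
      calc ∑ i, (e (j, i) * ((B i : ↥M) : L)) ^ p
          = ∑ i, ((g (j, i) : L) * ((B i : ↥M) : L) ^ p) := by
            refine Finset.sum_congr rfl fun i _ => ?_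
            rw [mul_pow, he2]
        _ = 0 := hd0 j
    have h8 : ∑ i, e (j, i) * ((B i : ↥M) : L) = 0 :=
      pow_eq_zero_iff (Fact.out : p.Prime).ne_zero |>.mp h7
    have h9 := Fintype.linearIndependent_iff.mp hBL (fun i => ⟨e (j, i), he1 (j, i)⟩) (by
      calc ∑ i, (⟨e (j, i), he1 (j, i)⟩ : ↥k1) • ((B i : ↥M) : L)
          = ∑ i, e (j, i) * ((B i : ↥M) : L) := by
            refine Finset.sum_congr rfl fun i _ => ?_
            rw [Algebra.smul_def]; rfl
        _ = 0 := h8) i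
    have h10 : e (j, i) = 0 := congrArg Subtype.val h9
    have : (g (j, i) : L) = 0 := by rw [← he2 (j, i), h10, zero_pow (Fact.out : p.Prime).ne_zero]
    exact Subtype.ext this
  -- transfer to M and conclude
  have hmem : ∀ ji : s × Fin n, ((ji.1 : L) * ((B ji.2 : ↥M) : L) ^ p) ∈ M := fun ji =>
    mul_mem (IntermediateField.subset_adjoin _ _ ji.1.2) (pow_mem (B ji.2).2 p)
  let f : s × Fin n → ↥M := fun ji => ⟨_, hmem ji⟩
  have hfd0M : FiniteDimensional ↥k0 ↥M := Module.Finite.trans ↥k1 ↥M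
  have hf : LinearIndependent ↥k0 f := by
    apply LinearIndependent.of_comp (LinearMap.restrictScalars ↥k0 M.val.toLinearMap)
    exact hbig
  have hcard := hf.fintype_card_le_finrank
  rw [Fintype.card_prod, Fintype.card_coe, Fintype.card_fin] at hcard
  have htower : finrank ↥k0 ↥k1 * n = finrank ↥k0 ↥M :=
    Module.finrank_mul_finrank ↥k0 ↥k1 ↥M
  have hnpos : 0 < n := Module.finrank_pos
  have : s.card * n ≤ p * n := by
    calc s.card * n ≤ finrank ↥k0 ↥M := hcard
      _ = finrank ↥k0 ↥k1 * n := htower.symm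
      _ ≤ p * n := Nat.mul_le_mul_right n hk01
  exact Nat.le_of_mul_le_mul_right this hnpos

/-- Let `K` be a perfect field of characteristic `p > 0` and `L` a field extension of
`K` of transcendence degree `1` (i.e. admitting a transcendence basis consisting of a
single element). If `L` is not perfect, then `[L : L^p] = p`, where `L^p` is the image
of `L` under the Frobenius `x ↦ x^p`. -/
theorem finrank_over_frobenius_range_eq_char (p : ℕ) [Fact p.Prime]
    {K L : Type*} [Field K] [Field L] [Algebra K L]
    [CharP K p] [CharP L p] [PerfectRing K p]
    (htr : ∃ t : L, IsTranscendenceBasis K (fun _ : Fin 1 => t))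
    (hnotperf : ¬ Function.Surjective (frobenius L p)) :
    Module.finrank ↥((frobenius L p).fieldRange) L = p := by
  obtain ⟨t, ht⟩ := htr
  have hp : p.Prime := Fact.out
  set F : Subfield L := (frobenius L p).fieldRange with hF
  have halg : Algebra.IsAlgebraic ↥(IntermediateField.adjoin K {t}) L := by
    have h := ht.isAlgebraic_field
    rwa [Set.range_const] at h
  -- rank bound
  have hrank : Module.rank ↥F L ≤ (p : Cardinal) := by
    refine rank_le fun s hs => ?_
    exact_mod_cast card_le_aux p halg s hs
  have hfd : FiniteDimensional ↥F L := by
    exact Module.rank_lt_aleph0_iff.mp (lt_of_le_of_lt hrank (Cardinal.nat_lt_aleph0 p))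
  have hle : finrank ↥F L ≤ p := by
    exact_mod_cast Module.finrank_le_of_rank_le hrank
  -- lower bound
  obtain ⟨a, ha⟩ : ∃ a : L, a ∉ F := by
    by_contra h
    push_neg at h
    exact hnotperf fun y => (h y)
  have hapF : a ^ p ∈ F := ⟨a, by simp [frobenius_def]⟩
  have hirr : Irreducible (X ^ p - C (⟨a ^ p, hapF⟩ : ↥F)) := by
    apply X_pow_sub_C_irreducible_of_prime hp
    intro b hb
    apply ha
    have hb' : (b : L) ^ p = a ^ p := congrArg Subtype.val hb
    have : (b : L) = a := by
      have := frobenius_inj L p (a₁ := (b : L)) (a₂ := a) (by simpa [frobenius_def] using hb')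
      exact this
    exact this ▸ b.2
  have haev : (Polynomial.aeval a) (X ^ p - C (⟨a ^ p, hapF⟩ : ↥F)) = 0 := by
    have : algebraMap ↥F L ⟨a ^ p, hapF⟩ = a ^ p := rfl
    simp [this]
  have hmon : (X ^ p - C (⟨a ^ p, hapF⟩ : ↥F)).Monic :=
    Polynomial.monic_X_pow_sub_C _ hp.ne_zero
  have hint : IsIntegral ↥F a := ⟨_, hmon, haev⟩
  have hmin : minpoly ↥F a = X ^ p - C (⟨a ^ p, hapF⟩ : ↥F) :=
    (minpoly.eq_of_irreducible_of_monic hirr haev hmon).symm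
  have hfr : finrank ↥F ↥F⟮a⟯ = p := by
    rw [IntermediateField.adjoin.finrank hint, hmin, Polynomial.natDegree_X_pow_sub_C]
  have hge : p ≤ finrank ↥F L := by
    rw [← hfr]
    exact LinearMap.finrank_le_finrank_of_injective
      (f := (IntermediateField.val F⟮a⟯).toLinearMap) Subtype.val_injective
  omega
end

section
/- Let Ω be an algebraically closed field, E a subfield of Ω, and a = (a₁,…,a_n) a tuple of elements of Ω each of which is separably algebraic over E. Let S be the orbit of a under the group of E-automorphisms of Ω acting coordinatewise. Then S is finite, and every coefficient of the polynomial ∏_{s ∈ S} (X₀ + s₁X₁ + ⋯ + s_nX_n), regarded as a polynomial in the n+1 variables X₀, X₁, …, X_n with coefficients in Ω, lies in E. -/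
open MvPolynomial

set_option maxHeartbeats 1000000 in
/-- Any automorphism of a subfield of an algebraically closed field extends to the field. -/
theorem extend_ringEquiv {Ω : Type*} [Field Ω] [IsAlgClosed Ω] (L : Subfield Ω) (σ : L ≃+* L) :
    ∃ g : Ω ≃+* Ω, ∀ x : L, g x = σ x := by
  obtain ⟨s, hs⟩ := exists_isTranscendenceBasis (↥L) Ω
  letI := IsAlgClosed.isAlgClosure_of_transcendence_basis _ hs
  let e : Algebra.adjoin ↥L (Set.range ((↑) : s → Ω)) ≃+*
      Algebra.adjoin ↥L (Set.range ((↑) : s → Ω)) :=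
    hs.1.aevalEquiv.symm.toRingEquiv.trans
      ((MvPolynomial.mapEquiv _ σ).trans hs.1.aevalEquiv.toRingEquiv)
  refine ⟨IsAlgClosure.equivOfEquiv Ω Ω e, fun x => ?_⟩
  have h2 : e (algebraMap ↥L _ x) = algebraMap ↥L _ (σ x) := by
    simp only [e, RingEquiv.trans_apply]
    have h3 : hs.1.aevalEquiv.symm.toRingEquiv (algebraMap ↥L _ x)
        = MvPolynomial.C x := by
      rw [AlgEquiv.toRingEquiv_eq_coe, AlgEquiv.coe_ringEquiv, AlgEquiv.symm_apply_eq]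
      exact (hs.1.aevalEquiv.commutes x).symm
    rw [h3]
    have h4 : (MvPolynomial.mapEquiv (s : Type _) σ) (MvPolynomial.C x)
        = MvPolynomial.C (σ x) := MvPolynomial.map_C _ _
    rw [h4, AlgEquiv.toRingEquiv_eq_coe, AlgEquiv.coe_ringEquiv]
    exact hs.1.aevalEquiv.commutes (σ x)
  have h5 := IsAlgClosure.equivOfEquiv_algebraMap Ω Ω e (algebraMap ↥L _ x)
  rw [h2] at h5
  have h6 : algebraMap (Algebra.adjoin ↥L (Set.range ((↑) : s → Ω))) Ω
      (algebraMap ↥L _ x) = (x : Ω) := rfl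
  have h7 : algebraMap (Algebra.adjoin ↥L (Set.range ((↑) : s → Ω))) Ω
      (algebraMap ↥L _ (σ x)) = (σ x : Ω) := rfl
  rw [h6, h7] at h5
  exact h5

set_option synthInstance.maxHeartbeats 1000000 in
set_option maxHeartbeats 1600000 in
/-- Let `Ω` be an algebraically closed field, `E` a subfield, and `a = (a₁,…,aₙ)` a
tuple of elements of `Ω`, each separably algebraic over `E`.  Then the orbit `S` of `a`
under the group of `E`-automorphisms of `Ω` (acting coordinatewise) is finite, and
every coefficient of the polynomial `∏_{s ∈ S} (X₀ + s₁X₁ + ⋯ + sₙXₙ)` lies in `E`. -/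
theorem code_mem_base_of_separable {Ω : Type*} [Field Ω] [IsAlgClosed Ω]
    (E : Subfield Ω) (n : ℕ) (a : Fin n → Ω) (ha : ∀ i, IsSeparable ↥E (a i)) :
    ∃ hS : {s : Fin n → Ω |
        ∃ g : Ω ≃+* Ω, (∀ x ∈ E, g x = x) ∧ ∀ i, s i = g (a i)}.Finite,
      ∀ d : Fin (n + 1) →₀ ℕ,
        MvPolynomial.coeff d
          (∏ s ∈ hS.toFinset,
            (X 0 + ∑ i : Fin n, MvPolynomial.C (s i) * X i.succ)) ∈ E := by
  classical
  have haI : ∀ i, IsIntegral ↥E (a i) := fun i => (ha i).isIntegral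
  -- automorphisms fixing E preserve roots of polynomials over E
  have hroot : ∀ (g : Ω ≃+* Ω), (∀ x ∈ E, g x = x) → ∀ (q : Polynomial ↥E) (x : Ω),
      Polynomial.aeval x q = 0 → Polynomial.aeval (g x) q = 0 := by
    intro g hg q x hx
    let g' : Ω →ₐ[↥E] Ω := { (g : Ω →+* Ω) with commutes' := fun y => hg y y.2 }
    have : Polynomial.aeval (g' x) q = g' (Polynomial.aeval x q) :=
      Polynomial.aeval_algHom_apply g' x q
    have h' : Polynomial.aeval (g' x) q = 0 := by simpa [hx] using this
    exact h'
  have hS : {s : Fin n → Ω |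
      ∃ g : Ω ≃+* Ω, (∀ x ∈ E, g x = x) ∧ ∀ i, s i = g (a i)}.Finite := by
    apply Set.Finite.subset
      (Set.Finite.pi (fun i => (minpoly ↥E (a i)).rootSet_finite Ω))
    rintro s ⟨g, hg, hs⟩
    rw [Set.mem_univ_pi]
    intro i
    rw [Polynomial.mem_rootSet]
    exact ⟨minpoly.ne_zero (haI i), by
      rw [hs i]; exact hroot g hg _ (a i) (minpoly.aeval _ _)⟩
  refine ⟨hS, fun d => ?_⟩
  -- the Galois extension L of E generated by all the conjugates
  set p : Polynomial ↥E := ∏ i : Fin n, minpoly ↥E (a i) with hpdef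
  have hp0 : p ≠ 0 := Finset.prod_ne_zero_iff.2 fun i _ => minpoly.ne_zero (haI i)
  have hpsplits : (p.map (algebraMap ↥E Ω)).Splits := IsAlgClosed.splits _
  set L : IntermediateField ↥E Ω := IntermediateField.adjoin ↥E (p.rootSet Ω) with hLdef
  haveI hsf : p.IsSplittingField ↥E L :=
    IntermediateField.adjoin_rootSet_isSplittingField hpsplits
  haveI : FiniteDimensional ↥E L := Polynomial.IsSplittingField.finiteDimensional L p
  haveI : Normal ↥E L := Normal.of_isSplittingField p
  haveI : Algebra.IsSeparable ↥E L := by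
    rw [hLdef]
    rw [IntermediateField.isSeparable_adjoin_iff_isSeparable]
    intro x hx
    rw [Polynomial.mem_rootSet] at hx
    have hxI : IsIntegral ↥E x := (IsAlgebraic.isIntegral ⟨p, hp0, hx.2⟩)
    have hdvd : minpoly ↥E x ∣ p := minpoly.dvd _ _ hx.2
    obtain ⟨i, -, hi⟩ := ((minpoly.irreducible hxI).prime).exists_mem_finset_dvd hdvd
    exact Polynomial.Separable.of_dvd (ha i) hi
  haveI : IsGalois ↥E L := ⟨⟩
  -- membership of the orbit coordinates in L
  have hmem : ∀ s ∈ hS.toFinset, ∀ i, s i ∈ L := by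
    intro s hs i
    rw [Set.Finite.mem_toFinset] at hs
    obtain ⟨g, hg, hsg⟩ := hs
    apply IntermediateField.subset_adjoin
    rw [Polynomial.mem_rootSet]
    refine ⟨hp0, ?_⟩
    rw [hpdef, map_prod]
    exact Finset.prod_eq_zero (Finset.mem_univ i)
      (by rw [hsg i]; exact hroot g hg _ (a i) (minpoly.aeval _ _))
  -- the polynomial over L
  let Q : MvPolynomial (Fin (n + 1)) ↥L :=
    ∏ s ∈ hS.toFinset.attach,
      (X 0 + ∑ i : Fin n, MvPolynomial.C (⟨s.1 i, hmem s.1 s.2 i⟩ : ↥L) * X i.succ)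
  have hPQ : MvPolynomial.map (algebraMap ↥L Ω) Q =
      ∏ s ∈ hS.toFinset, (X 0 + ∑ i : Fin n, MvPolynomial.C (s i) * X i.succ) := by
    rw [map_prod, ← Finset.prod_attach hS.toFinset]
    refine Finset.prod_congr rfl fun s _ => ?_
    simp only [map_add, map_sum, map_mul, MvPolynomial.map_C, MvPolynomial.map_X]
    rfl
  have hQP : ((MvPolynomial.coeff d Q : ↥L) : Ω) =
      MvPolynomial.coeff d
        (∏ s ∈ hS.toFinset, (X 0 + ∑ i : Fin n, MvPolynomial.C (s i) * X i.succ)) := by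
    rw [← hPQ, MvPolynomial.coeff_map]
    rfl
  -- the coefficient is fixed by every element of the Galois group
  have hfix : ∀ τ : ↥L ≃ₐ[↥E] ↥L, τ (MvPolynomial.coeff d Q) = MvPolynomial.coeff d Q := by
    intro τ
    obtain ⟨g, hgτ⟩ := extend_ringEquiv L.toSubfield τ.toRingEquiv
    have hgE : ∀ x ∈ E, g x = x := by
      intro x hx
      have hxL : x ∈ L := L.algebraMap_mem ⟨x, hx⟩
      have h1 : g x = ((τ.toRingEquiv ⟨x, hxL⟩ : ↥L) : Ω) := hgτ ⟨x, hxL⟩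
      have h2 : (⟨x, hxL⟩ : ↥L) = algebraMap ↥E ↥L ⟨x, hx⟩ := rfl
      rw [h1, h2]
      have := τ.commutes ⟨x, hx⟩
      rw [show τ.toRingEquiv (algebraMap ↥E ↥L ⟨x, hx⟩) = τ (algebraMap ↥E ↥L ⟨x, hx⟩) from rfl,
        this]
      rfl
    -- `g` permutes the orbit
    have hgS : ∀ s ∈ hS.toFinset, (fun i => g (s i)) ∈ hS.toFinset := by
      intro s hs
      rw [Set.Finite.mem_toFinset] at hs ⊢
      obtain ⟨g', hg', hs'⟩ := hs
      exact ⟨g'.trans g, fun x hx => by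
          rw [RingEquiv.trans_apply, hg' x hx, hgE x hx],
        fun i => by show g (s i) = g (g' (a i)); rw [hs' i]⟩
    have hgS' : ∀ s ∈ hS.toFinset, (fun i => g.symm (s i)) ∈ hS.toFinset := by
      intro s hs
      rw [Set.Finite.mem_toFinset] at hs ⊢
      obtain ⟨g', hg', hs'⟩ := hs
      refine ⟨g'.trans g.symm, fun x hx => ?_, fun i => by show g.symm (s i) = g.symm (g' (a i)); rw [hs' i]⟩
      rw [RingEquiv.trans_apply, hg' x hx]
      conv_lhs => rw [← hgE x hx]
      exact g.symm_apply_apply x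
    -- applying `g` to all coefficients fixes the product
    have hmapP : MvPolynomial.map (g : Ω →+* Ω)
        (∏ s ∈ hS.toFinset, (X 0 + ∑ i : Fin n, MvPolynomial.C (s i) * X i.succ)) =
        ∏ s ∈ hS.toFinset, (X 0 + ∑ i : Fin n, MvPolynomial.C (s i) * X i.succ) := by
      rw [map_prod]
      have hfac : ∀ s : Fin n → Ω,
          MvPolynomial.map (g : Ω →+* Ω) (X 0 + ∑ i : Fin n, MvPolynomial.C (s i) * X i.succ)
            = (X 0 + ∑ i : Fin n, MvPolynomial.C (g (s i)) * X i.succ) := by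
        intro s
        simp only [map_add, map_sum, map_mul, MvPolynomial.map_C, MvPolynomial.map_X]
        rfl
      rw [Finset.prod_congr rfl fun s _ => hfac s]
      exact Finset.prod_bij' (fun s _ => fun i => g (s i)) (fun s _ => fun i => g.symm (s i))
        hgS hgS' (fun s _ => funext fun i => g.symm_apply_apply (s i))
        (fun s _ => funext fun i => g.apply_symm_apply (s i)) (fun s _ => rfl)
    have h1 : g (MvPolynomial.coeff d
        (∏ s ∈ hS.toFinset, (X 0 + ∑ i : Fin n, MvPolynomial.C (s i) * X i.succ))) =
        MvPolynomial.coeff d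
          (∏ s ∈ hS.toFinset, (X 0 + ∑ i : Fin n, MvPolynomial.C (s i) * X i.succ)) := by
      conv_rhs => rw [← hmapP]
      rw [MvPolynomial.coeff_map]
      rfl
    apply Subtype.ext
    calc ((τ (MvPolynomial.coeff d Q) : ↥L) : Ω)
        = g ((MvPolynomial.coeff d Q : ↥L) : Ω) := (hgτ _).symm
      _ = ((MvPolynomial.coeff d Q : ↥L) : Ω) := by rw [hQP, h1, ← hQP]
  -- conclude via the Galois correspondence
  have hbot : MvPolynomial.coeff d Q ∈ (⊥ : IntermediateField ↥E ↥L) := by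
    have h2 : IntermediateField.fixedField (⊤ : Subgroup (↥L ≃ₐ[↥E] ↥L)) = ⊥ := by
      have h3 := IsGalois.fixedField_fixingSubgroup (⊥ : IntermediateField ↥E ↥L)
      rwa [IntermediateField.fixingSubgroup_bot] at h3
    rw [← h2]
    rintro ⟨τ, -⟩
    exact hfix τ
  obtain ⟨y, hy⟩ := IntermediateField.mem_bot.1 hbot
  have h4 : ((MvPolynomial.coeff d Q : ↥L) : Ω) = (y : Ω) := by
    rw [← hy]; rfl
  rw [← hQP, h4]
  exact y.2
end

section
/- Let Ω be an algebraically closed field of characteristic p > 0, E a subfield of Ω, and a = (a₁,…,a_n) a tuple of elements of Ω each of which is algebraic over E. Let S be the orbit of a under the group of E-automorphisms of Ω acting coordinatewise. Then S is finite, and there exists r ≥ 0 such that for every coefficient c of the polynomial ∏_{s ∈ S} (X₀ + s₁X₁ + ⋯ + s_nX_n), regarded as a polynomial in the n+1 variables X₀, X₁, …, X_n with coefficients in Ω, one has c^{p^r} ∈ E. -/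
set_option synthInstance.maxHeartbeats 1000000
set_option maxHeartbeats 2000000
set_option linter.unnecessarySimpa false

open MvPolynomial

/-- Any automorphism of a subfield `F` of an algebraically closed field `Ω`
extends to an automorphism of `Ω`. -/
theorem exists_ringEquiv_extension {F Ω : Type*} [Field F] [Field Ω] [IsAlgClosed Ω]
    [Algebra F Ω] (σ : F ≃+* F) :
    ∃ g : Ω ≃+* Ω, ∀ z : F, g (algebraMap F Ω z) = algebraMap F Ω (σ z) := by
  obtain ⟨s, hs⟩ := exists_isTranscendenceBasis F Ω
  haveI := IsAlgClosed.isAlgClosure_of_transcendence_basis _ hs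
  set A := Algebra.adjoin F (Set.range ((↑) : s → Ω)) with hA
  haveI : Module.IsTorsionFree (↥A) Ω :=
    Module.isTorsionFree_iff_algebraMap_injective.2 Subtype.val_injective
  let e : A ≃+* A :=
    hs.1.aevalEquiv.symm.toRingEquiv.trans
      ((MvPolynomial.mapEquiv _ σ).trans hs.1.aevalEquiv.toRingEquiv)
  refine ⟨IsAlgClosure.equivOfEquiv Ω Ω e, fun z => ?_⟩
  have h2 : e (algebraMap F A z) = algebraMap F A (σ z) := by
    show hs.1.aevalEquiv ((MvPolynomial.mapEquiv _ σ)
      (hs.1.aevalEquiv.symm (algebraMap F A z))) = _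
    have h3 : hs.1.aevalEquiv.symm (algebraMap F A z) = MvPolynomial.C z := by
      rw [AlgEquiv.symm_apply_eq]
      exact (hs.1.aevalEquiv.commutes z).symm
    rw [h3]
    have h4 : (MvPolynomial.mapEquiv (s : Type _) σ) (MvPolynomial.C z)
        = MvPolynomial.C (σ z) := by
      simp [MvPolynomial.mapEquiv_apply]
    rw [h4]
    simpa [MvPolynomial.algebraMap_eq] using hs.1.aevalEquiv.commutes (σ z)
  rw [IsScalarTower.algebraMap_apply F (↥A) Ω z,
    IsAlgClosure.equivOfEquiv_algebraMap Ω Ω e (algebraMap F A z), h2,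
    ← IsScalarTower.algebraMap_apply]

theorem exists_conj_ringEquiv {Ω : Type*} [Field Ω] [IsAlgClosed Ω] (E : Subfield Ω)
    {x y : Ω} (hx : IsAlgebraic ↥E x) (hy : Polynomial.aeval y (minpoly ↥E x) = 0) :
    ∃ g : Ω ≃+* Ω, (∀ z ∈ E, g z = z) ∧ g x = y := by
  set M := algebraicClosure ↥E Ω with hM
  have hx' : x ∈ M := mem_algebraicClosure_iff.2 hx
  have hyalg : IsAlgebraic ↥E y := ⟨minpoly ↥E x, minpoly.ne_zero hx.isIntegral, hy⟩
  have hy' : y ∈ M := mem_algebraicClosure_iff.2 hyalg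
  set x' : ↥M := ⟨x, hx'⟩ with hx'd
  set y' : ↥M := ⟨y, hy'⟩ with hy'd
  have hinj : Function.Injective (algebraMap ↥M Ω) := Subtype.val_injective
  have hmx : minpoly ↥E x' = minpoly ↥E x := by
    have := minpoly.algebraMap_eq (A := ↥E) hinj x'
    simpa using this.symm
  have hmy : minpoly ↥E y' = minpoly ↥E y := by
    have := minpoly.algebraMap_eq (A := ↥E) hinj y'
    simpa using this.symm
  have hyx : minpoly ↥E y = minpoly ↥E x :=
    (minpoly.eq_of_irreducible_of_monic (minpoly.irreducible hx.isIntegral) hy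
      (minpoly.monic hx.isIntegral)).symm
  have hconj : IsConjRoot ↥E y' x' := by
    rw [IsConjRoot, hmx, hmy, hyx]
  obtain ⟨σ, hσ⟩ := hconj.exists_algEquiv
  obtain ⟨g, hg⟩ := exists_ringEquiv_extension (Ω := Ω) σ.toRingEquiv
  refine ⟨g, fun z hz => ?_, ?_⟩
  · have hzM : z ∈ M := mem_algebraicClosure_iff.2 (isAlgebraic_algebraMap (⟨z, hz⟩ : ↥E))
    have hfix : σ ⟨z, hzM⟩ = ⟨z, hzM⟩ := by
      have h0 : (⟨z, hzM⟩ : ↥M) = algebraMap ↥E ↥M ⟨z, hz⟩ := rfl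
      rw [h0, AlgEquiv.commutes]
    have h2 := hg ⟨z, hzM⟩
    rw [show algebraMap ↥M Ω ⟨z, hzM⟩ = z from rfl] at h2
    rw [h2]
    exact congrArg Subtype.val hfix
  · have h2 := hg x'
    rw [show algebraMap ↥M Ω x' = x from rfl] at h2
    rw [h2]
    exact congrArg Subtype.val hσ

/-- Let `Ω` be an algebraically closed field of characteristic `p > 0`, `E` a subfield,
and `a = (a₁,…,aₙ)` a tuple of elements of `Ω`, each algebraic over `E`.  Then the
orbit `S` of `a` under the group of `E`-automorphisms of `Ω` (acting coordinatewise) is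
finite, and there is `r ≥ 0` such that the `pʳ`-th power of every coefficient of the
polynomial `∏_{s ∈ S} (X₀ + s₁X₁ + ⋯ + sₙXₙ)` lies in `E`. -/
theorem code_pow_mem_base_of_algebraic (p : ℕ) [Fact p.Prime]
    {Ω : Type*} [Field Ω] [IsAlgClosed Ω] [CharP Ω p]
    (E : Subfield Ω) (n : ℕ) (a : Fin n → Ω) (ha : ∀ i, IsAlgebraic ↥E (a i)) :
    ∃ hS : {s : Fin n → Ω |
        ∃ g : Ω ≃+* Ω, (∀ x ∈ E, g x = x) ∧ ∀ i, s i = g (a i)}.Finite,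
      ∃ r : ℕ, ∀ d : Fin (n + 1) →₀ ℕ,
        (MvPolynomial.coeff d
          (∏ s ∈ hS.toFinset,
            (X 0 + ∑ i : Fin n, MvPolynomial.C (s i) * X i.succ))) ^ p ^ r ∈ E := by
  classical
  have haeval : ∀ (g : Ω ≃+* Ω), (∀ x ∈ E, g x = x) → ∀ (z : Ω) (q : Polynomial ↥E),
      Polynomial.aeval z q = 0 → Polynomial.aeval (g z) q = 0 := by
    intro g hg z q hq
    have hcomp : (g : Ω →+* Ω).comp (algebraMap ↥E Ω) = algebraMap ↥E Ω := by
      ext e; exact hg e e.2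
    have heq : Polynomial.eval₂ (algebraMap ↥E Ω) (g z) q
        = (g : Ω →+* Ω) (Polynomial.eval₂ (algebraMap ↥E Ω) z q) := by
      rw [Polynomial.hom_eval₂, hcomp]; rfl
    rw [Polynomial.aeval_def, heq, ← Polynomial.aeval_def, hq, map_zero]
  have hS : {s : Fin n → Ω |
      ∃ g : Ω ≃+* Ω, (∀ x ∈ E, g x = x) ∧ ∀ i, s i = g (a i)}.Finite := by
    apply Set.Finite.subset (Set.Finite.pi (fun i : Fin n =>
      (minpoly ↥E (a i)).rootSet_finite Ω))
    rintro s ⟨g, hg, hs⟩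
    intro i _
    rw [Polynomial.mem_rootSet]
    exact ⟨minpoly.ne_zero (ha i).isIntegral,
      hs i ▸ haeval g hg _ _ (minpoly.aeval _ _)⟩
  refine ⟨hS, ?_⟩
  set F := hS.toFinset with hF
  set P : MvPolynomial (Fin (n+1)) Ω :=
    ∏ s ∈ F, (X 0 + ∑ i : Fin n, MvPolynomial.C (s i) * X i.succ) with hP
  have hmemF : ∀ s, s ∈ F ↔ ∃ g : Ω ≃+* Ω, (∀ x ∈ E, g x = x) ∧ ∀ i, s i = g (a i) := by
    intro s; rw [hF, Set.Finite.mem_toFinset]; rfl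
  -- invariance of coefficients
  have hfix : ∀ (g : Ω ≃+* Ω), (∀ x ∈ E, g x = x) →
      ∀ d : Fin (n+1) →₀ ℕ, g (MvPolynomial.coeff d P) = MvPolynomial.coeff d P := by
    intro g hg d
    have hgsymm : ∀ x ∈ E, g.symm x = x := by
      intro x hx
      have := hg x hx
      conv_lhs => rw [← this]
      exact g.symm_apply_apply x
    have hmap : MvPolynomial.map (g : Ω →+* Ω) P = P := by
      rw [hP, map_prod]
      have h1 : ∀ s ∈ F, MvPolynomial.map (g : Ω →+* Ω)
          (X 0 + ∑ i : Fin n, MvPolynomial.C (s i) * X i.succ)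
          = (X 0 + ∑ i : Fin n, MvPolynomial.C (g (s i)) * X i.succ) := by
        intro s _
        simp [map_add, map_sum, map_mul]
      rw [Finset.prod_congr rfl h1]
      refine Finset.prod_nbij' (fun s => fun i => g (s i)) (fun s => fun i => g.symm (s i))
        ?_ ?_ ?_ ?_ ?_
      · intro s hsF
        obtain ⟨h, hh, hsa⟩ := (hmemF s).1 hsF
        refine (hmemF _).2 ⟨h.trans g, fun x hx => ?_, fun i => ?_⟩
        · rw [RingEquiv.trans_apply, hh x hx, hg x hx]
        · rw [RingEquiv.trans_apply, ← hsa i]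
      · intro s hsF
        obtain ⟨h, hh, hsa⟩ := (hmemF s).1 hsF
        refine (hmemF _).2 ⟨h.trans g.symm, fun x hx => ?_, fun i => ?_⟩
        · rw [RingEquiv.trans_apply, hh x hx, hgsymm x hx]
        · rw [RingEquiv.trans_apply, ← hsa i]
      · intro s _; funext i; exact g.symm_apply_apply (s i)
      · intro s _; funext i; exact g.apply_symm_apply (s i)
      · intro s _; rfl
    calc g (MvPolynomial.coeff d P)
        = MvPolynomial.coeff d (MvPolynomial.map (g : Ω →+* Ω) P) :=
          (MvPolynomial.coeff_map (g : Ω →+* Ω) P d).symm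
      _ = MvPolynomial.coeff d P := by rw [hmap]
  -- coefficients are algebraic over E
  set M := algebraicClosure ↥E Ω with hM
  have hsM : ∀ s ∈ F, ∀ i, s i ∈ M := by
    intro s hsF i
    obtain ⟨g, hg, hsa⟩ := (hmemF s).1 hsF
    exact mem_algebraicClosure_iff.2 ⟨minpoly ↥E (a i), minpoly.ne_zero (ha i).isIntegral,
      hsa i ▸ haeval g hg _ _ (minpoly.aeval _ _)⟩
  have hco : ∀ d : Fin (n+1) →₀ ℕ, MvPolynomial.coeff d P ∈ M := by
    intro d
    set Q : MvPolynomial (Fin (n+1)) ↥M := ∏ s ∈ F.attach,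
      (X 0 + ∑ i : Fin n, MvPolynomial.C (⟨s.1 i, hsM s.1 s.2 i⟩ : ↥M) * X i.succ) with hQ
    have hPQ : MvPolynomial.map (algebraMap ↥M Ω) Q = P := by
      rw [hQ, map_prod, hP,
        ← Finset.prod_attach F (fun s => X 0 + ∑ i : Fin n, MvPolynomial.C (s i) * X i.succ)]
      apply Finset.prod_congr rfl
      intro s _
      simp [map_add, map_sum, map_mul]
    rw [← hPQ, MvPolynomial.coeff_map]
    exact SetLike.coe_mem _
  haveI : CharP ↥E p := Subfield.charP E p
  haveI : ExpChar ↥E p := ExpChar.prime Fact.out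
  have key : ∀ d : Fin (n+1) →₀ ℕ, ∃ r : ℕ, (MvPolynomial.coeff d P) ^ p ^ r ∈ E := by
    intro d
    have hxalg : IsAlgebraic ↥E (MvPolynomial.coeff d P) := mem_algebraicClosure_iff.1 (hco d)
    have huniq : ∀ y : Ω, Polynomial.aeval y (minpoly ↥E (MvPolynomial.coeff d P)) = 0 →
        y = MvPolynomial.coeff d P := by
      intro y hy
      obtain ⟨g, hg, hgx⟩ := exists_conj_ringEquiv E hxalg hy
      rw [← hgx]
      exact hfix g hg d
    have h1 : (minpoly ↥E (MvPolynomial.coeff d P)).natSepDegree = 1 := by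
      rw [Polynomial.natSepDegree_eq_of_isAlgClosed (E := Ω)]
      have heq : ((minpoly ↥E (MvPolynomial.coeff d P)).aroots Ω).toFinset
          = {MvPolynomial.coeff d P} := by
        apply Finset.Subset.antisymm
        · intro y hy
          rw [Multiset.mem_toFinset, Polynomial.mem_aroots] at hy
          exact Finset.mem_singleton.2 (huniq y hy.2)
        · intro y hy
          rw [Finset.mem_singleton] at hy
          rw [hy, Multiset.mem_toFinset, Polynomial.mem_aroots]
          exact ⟨minpoly.ne_zero hxalg.isIntegral, minpoly.aeval _ _⟩
      rw [heq, Finset.card_singleton]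
    obtain ⟨r, c, hc⟩ := (minpoly.natSepDegree_eq_one_iff_pow_mem p).1 h1
    refine ⟨r, ?_⟩
    rw [← hc]
    exact c.2
  choose rr hrr using key
  refine ⟨P.support.sup rr, fun d => ?_⟩
  by_cases hd : d ∈ P.support
  · have hle : rr d ≤ P.support.sup rr := Finset.le_sup hd
    have hpow : (MvPolynomial.coeff d P) ^ p ^ (P.support.sup rr)
        = ((MvPolynomial.coeff d P) ^ p ^ (rr d)) ^ p ^ (P.support.sup rr - rr d) := by
      rw [← pow_mul, ← pow_add, Nat.add_sub_cancel' hle]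
    rw [hpow]
    exact pow_mem (hrr d) _
  · rw [MvPolynomial.notMem_support_iff.1 hd,
      zero_pow (pow_ne_zero _ (Nat.Prime.ne_zero Fact.out))]
    exact zero_mem E
end

section
/- Let U be a field with a ring automorphism σ and K a subfield of U with σ(K) = K. Let a = (a₁,…,a_n) be a tuple of elements of U such that each σ(a_j) is algebraic over K(a). Then for every k ≥ 0 the extension K(a,σ(a),…,σ^{k+1}(a)) / K(a,σ(a),…,σ^k(a)) is finite, and the sequence of degrees d_k = [K(a,σ(a),…,σ^{k+1}(a)) : K(a,σ(a),…,σ^k(a))] is nonincreasing in k (hence eventually constant). -/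
/-- The subfield `K(a, σ(a), …, σᵏ(a))` of `U` generated by `K` and the first `k + 1`
transforms of the tuple `a` under `σ`. -/
def segField {U : Type*} [Field U] (K : Subfield U) (σ : U ≃+* U) {n : ℕ}
    (a : Fin n → U) (k : ℕ) : Subfield U :=
  Subfield.closure ((K : Set U) ∪ {x | ∃ j ≤ k, ∃ i, x = (⇑σ)^[j] (a i)})

/-- The degree `[F : E]` of an extension of subfields of a field (equal to `0` if
`E ≰ F` or if the extension is infinite). -/
noncomputable def fieldDeg {Ω : Type*} [Field Ω] (E F : Subfield Ω) : ℕ :=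
  letI := Classical.dec (E ≤ F)
  if h : E ≤ F then
    letI := (Subfield.inclusion h).toAlgebra
    Module.finrank ↥E ↥F
  else 0

/-- `F` is a finite extension of the subfield `E`. -/
def fieldFinite {Ω : Type*} [Field Ω] (E F : Subfield Ω) : Prop :=
  ∃ h : E ≤ F,
    letI := (Subfield.inclusion h).toAlgebra
    FiniteDimensional ↥E ↥F

open Module Cardinal

section Aux
variable {U : Type*} [Field U]

set_option maxHeartbeats 1000000
set_option synthInstance.maxHeartbeats 1000000

lemma Subfield.map_closure' (f : U →+* U) (s : Set U) :
    (Subfield.closure s).map f = Subfield.closure (f '' s) := by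
  apply le_antisymm
  · rw [Subfield.map_le_iff_le_comap, Subfield.closure_le]
    exact fun x hx => Subfield.subset_closure ⟨x, hx, rfl⟩
  · rw [Subfield.closure_le]
    rintro _ ⟨x, hx, rfl⟩
    exact ⟨x, Subfield.subset_closure hx, rfl⟩

lemma range_algebraMap_subfield (A : Subfield U) :
    Set.range (algebraMap ↥A U) = (A : Set U) :=
  Set.ext fun x => ⟨fun ⟨y, hy⟩ => hy ▸ y.2, fun hx => ⟨⟨x, hx⟩, rfl⟩⟩

lemma fieldDeg_eq_toNat {A B : Subfield U} (h : A ≤ B) :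
    fieldDeg A B = Cardinal.toNat (Subfield.relrank A B) := by
  rw [Subfield.relrank_eq_rank_of_le h]
  unfold fieldDeg
  rw [dif_pos h]
  rfl

lemma fieldFinite_of_relrank_lt {A B : Subfield U} (h : A ≤ B)
    (hr : Subfield.relrank A B < ℵ₀) : fieldFinite A B := by
  rw [Subfield.relrank_eq_rank_of_le h] at hr
  refine ⟨h, ?_⟩
  letI := (Subfield.inclusion h).toAlgebra
  show FiniteDimensional ↥A ↥B
  exact Module.rank_lt_aleph0_iff.mp hr

lemma keyrel {E F E' : Subfield U} (hEF : E ≤ F) (hEE' : E ≤ E')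
    (hfin : Subfield.relrank E F < ℵ₀) :
    Subfield.relrank E' (E' ⊔ F) ≤ Subfield.relrank E F := by
  rw [Subfield.relrank_eq_rank_of_le hEF] at hfin ⊢
  rw [Subfield.relrank_eq_rank_of_le (le_sup_left : E' ≤ E' ⊔ F)]
  letI : Algebra ↥E ↥E' := (Subfield.inclusion hEE').toAlgebra
  haveI : IsScalarTower ↥E ↥E' U := IsScalarTower.of_algebraMap_eq' rfl
  set L : IntermediateField ↥E U := Subfield.extendScalars hEF with hL
  haveI : Module.Finite ↥E ↥L := Module.rank_lt_aleph0_iff.mp hfin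
  haveI : Algebra.IsAlgebraic ↥E ↥L := Algebra.IsAlgebraic.of_finite _ _
  have hr := IntermediateField.adjoin_rank_le_of_isAlgebraic_right ↥E' L
  have hE : IntermediateField.adjoin ↥E' (L : Set U) =
      Subfield.extendScalars (le_sup_left : E' ≤ E' ⊔ F) := by
    apply SetLike.coe_injective
    have h1 : (IntermediateField.adjoin ↥E' (L : Set U)).toSubfield =
        Subfield.closure (Set.range (algebraMap ↥E' U) ∪ (L : Set U)) :=
      IntermediateField.adjoin_toSubfield _ _
    have h2 : Subfield.closure (Set.range (algebraMap ↥E' U) ∪ (L : Set U)) = E' ⊔ F := by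
      rw [range_algebraMap_subfield, show (L : Set U) = (F : Set U) from rfl,
        Subfield.closure_union, Subfield.closure_eq, Subfield.closure_eq]
    show ((IntermediateField.adjoin ↥E' (L : Set U)).toSubfield : Set U) =
      ((E' ⊔ F : Subfield U) : Set U)
    rw [h1, h2]
  rwa [hE] at hr

end Aux

set_option maxHeartbeats 1000000 in
set_option synthInstance.maxHeartbeats 1000000 in
/-- Let `U` be a field with a ring automorphism `σ`, `K` a subfield with `σ(K) = K`,
and `a` a tuple in `U` with each `σ(aⱼ)` algebraic over `K(a)`.  Then each extension
`K(a,…,σ^{k+1}(a)) / K(a,…,σᵏ(a))` is finite and the sequence of degrees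
`dₖ = [K(a,…,σ^{k+1}(a)) : K(a,…,σᵏ(a))]` is nonincreasing in `k`. -/
theorem limit_degree_sequence_antitone {U : Type*} [Field U] (σ : U ≃+* U)
    (K : Subfield U) (hK : K.map (σ : U →+* U) = K) {n : ℕ} (a : Fin n → U)
    (halg : ∀ i, IsAlgebraic ↥(segField K σ a 0) (σ (a i))) :
    (∀ k, fieldFinite (segField K σ a k) (segField K σ a (k + 1))) ∧
      ∀ k, fieldDeg (segField K σ a (k + 1)) (segField K σ a (k + 2)) ≤
        fieldDeg (segField K σ a k) (segField K σ a (k + 1)) := by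
  set f : U →+* U := (σ : U →+* U) with hf
  set S : ℕ → Set U := fun k => {x | ∃ j ≤ k, ∃ i, x = (⇑σ)^[j] (a i)} with hS
  set E : ℕ → Subfield U := segField K σ a with hE
  have hseg : ∀ k, E k = Subfield.closure ((K : Set U) ∪ S k) := fun _ => rfl
  -- monotonicity
  have hSmono : ∀ k, S k ⊆ S (k + 1) := by
    rintro k x ⟨j, hj, i, rfl⟩
    exact ⟨j, hj.trans (Nat.le_succ k), i, rfl⟩
  have mono : ∀ k, E k ≤ E (k + 1) := fun k =>
    Subfield.closure_mono (Set.union_subset_union_right _ (hSmono k))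
  -- image of generators under σ
  have hKset : ⇑f '' (K : Set U) = (K : Set U) := by
    have := congrArg (fun (A : Subfield U) => (A : Set U)) hK
    simpa [Subfield.coe_map] using this
  have hSim : ∀ k, ⇑f '' S k ⊆ S (k + 1) := by
    rintro k _ ⟨x, ⟨j, hj, i, rfl⟩, rfl⟩
    exact ⟨j + 1, Nat.succ_le_succ hj, i, (Function.iterate_succ_apply' (⇑σ) j (a i)).symm⟩
  have hmap : ∀ k, (E k).map f ≤ E (k + 1) := by
    intro k
    rw [hseg k, Subfield.map_closure', hseg (k + 1)]
    apply Subfield.closure_mono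
    rw [Set.image_union, hKset]
    exact Set.union_subset_union_right _ (hSim k)
  -- sup decomposition
  have hsup : ∀ k, E (k + 1) = E k ⊔ (E k).map f := by
    intro k
    refine le_antisymm ?_ (sup_le (mono k) (hmap k))
    rw [hseg (k + 1), Subfield.closure_le]
    rintro x (hx | ⟨j, hj, i, rfl⟩)
    · exact (le_sup_left : E k ≤ E k ⊔ (E k).map f) (Subfield.subset_closure (Or.inl hx))
    · cases j with
      | zero =>
        exact (le_sup_left : E k ≤ E k ⊔ (E k).map f)
          (Subfield.subset_closure (Or.inr ⟨0, Nat.zero_le k, i, rfl⟩))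
      | succ m =>
        refine (le_sup_right : (E k).map f ≤ E k ⊔ (E k).map f) ?_
        refine ⟨(⇑σ)^[m] (a i),
          Subfield.subset_closure (Or.inr ⟨m, Nat.succ_le_succ_iff.mp hj, i, rfl⟩), ?_⟩
        exact (Function.iterate_succ_apply' (⇑σ) m (a i)).symm
  -- base case
  have base : Subfield.relrank (E 0) (E 1) < ℵ₀ := by
    rw [Subfield.relrank_eq_rank_of_le (mono 0)]
    have hX : Subfield.extendScalars (mono 0) =
        IntermediateField.adjoin ↥(E 0) (Set.range fun i => σ (a i)) := by
      apply SetLike.coe_injective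
      have hS1 : S 1 = S 0 ∪ Set.range fun i => σ (a i) := by
        ext x
        constructor
        · rintro ⟨j, hj, i, rfl⟩
          rcases Nat.le_one_iff_eq_zero_or_eq_one.mp hj with rfl | rfl
          · exact Or.inl ⟨0, le_rfl, i, rfl⟩
          · exact Or.inr ⟨i, by simp⟩
        · rintro (⟨j, hj, i, rfl⟩ | ⟨i, rfl⟩)
          · exact ⟨j, hj.trans (Nat.zero_le 1), i, rfl⟩
          · exact ⟨1, le_rfl, i, by simp⟩
      have hset : (K : Set U) ∪ S 1 = ((K : Set U) ∪ S 0) ∪ Set.range fun i => σ (a i) := by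
        rw [Set.union_assoc, hS1]
      have h1 : E 1 = Subfield.closure ((E 0 : Set U) ∪ Set.range fun i => σ (a i)) := by
        rw [Subfield.closure_union, Subfield.closure_eq, hseg 1, hseg 0,
          ← Subfield.closure_union]
        exact congrArg _ hset
      show ((E 1 : Subfield U) : Set U) =
        ((IntermediateField.adjoin ↥(E 0) (Set.range fun i => σ (a i))).toSubfield : Set U)
      rw [IntermediateField.adjoin_toSubfield, range_algebraMap_subfield, h1]
    rw [hX]
    haveI : Finite ↥(Set.range fun i => σ (a i)) := (Set.finite_range _).to_subtype
    haveI : FiniteDimensional ↥(E 0)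
        (IntermediateField.adjoin ↥(E 0) (Set.range fun i => σ (a i))) := by
      apply IntermediateField.finiteDimensional_adjoin
      rintro x ⟨i, rfl⟩
      exact (halg i).isIntegral
    exact Module.rank_lt_aleph0_iff.mpr inferInstance
  -- inductive step
  have hmapmono : ∀ k, (E k).map f ≤ (E (k + 1)).map f := by
    rintro k x hx
    rw [Subfield.mem_map] at hx ⊢
    obtain ⟨y, hy, rfl⟩ := hx
    exact ⟨y, mono k hy, rfl⟩
  have step : ∀ k, Subfield.relrank (E k) (E (k + 1)) < ℵ₀ →
      Subfield.relrank (E (k + 1)) (E (k + 2)) ≤ Subfield.relrank (E k) (E (k + 1)) := by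
    intro k hk
    have h := keyrel (hmapmono k) (hmap k)
      (by rwa [Subfield.relrank_map_map])
    rwa [Subfield.relrank_map_map, ← hsup (k + 1)] at h
  have fin : ∀ k, Subfield.relrank (E k) (E (k + 1)) < ℵ₀ := by
    intro k
    induction k with
    | zero => exact base
    | succ m ih => exact lt_of_le_of_lt (step m ih) ih
  refine ⟨fun k => fieldFinite_of_relrank_lt (mono k) (fin k), fun k => ?_⟩
  rw [fieldDeg_eq_toNat (mono (k + 1)), fieldDeg_eq_toNat (mono k)]
  exact Cardinal.toNat_le_toNat (step k (fin k)) (fin k)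
end

section
/- Let U be a field with a ring automorphism σ and K a subfield of U with σ(K) = K. Let a and b be finite tuples of elements of U such that σ(a) is algebraic over K(a) (coordinatewise), σ(b) is algebraic over K(b) (coordinatewise), and b is algebraic over K(a) (coordinatewise). If ld(b/K) = 1, then the compositum K(a,b)_{σ^{±1}} (the subfield generated by K and all σ^i(a_j), σ^i(b_j), i ∈ ℤ) is a finite extension of K(a)_{σ^{±1}}. -/
open Polynomial
set_option synthInstance.maxHeartbeats 1000000
set_option maxHeartbeats 2000000
set_option linter.unusedVariables false



/-- The inversive difference subfield `K(a)_{σ^{±1}}` generated by `K` and all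
`σ^i(aⱼ)`, `i ∈ ℤ`. -/
def fullField {U : Type*} [Field U] (K : Subfield U) (σ : U ≃+* U) {n : ℕ}
    (a : Fin n → U) : Subfield U :=
  Subfield.closure ((K : Set U) ∪
    {x | ∃ (j : ℕ) (i : Fin n), x = (⇑σ)^[j] (a i) ∨ x = (⇑σ.symm)^[j] (a i)})

/-- The sequence of degrees `dₖ = [K(a,…,σ^{k+1}(a)) : K(a,…,σᵏ(a))]`, whose eventual
value is the limit degree `ld(a/K)`. -/
noncomputable def ldSeq {U : Type*} [Field U] (K : Subfield U) (σ : U ≃+* U) {n : ℕ}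
    (a : Fin n → U) : ℕ → ℕ :=
  fun k => fieldDeg (segField K σ a k) (segField K σ a (k + 1))

/-- `l` is the eventual value of the sequence `d`. -/
def IsEventualValue (d : ℕ → ℕ) (l : ℕ) : Prop :=
  ∃ N, ∀ k ≥ N, d k = l

section Helpers
variable {U : Type*} [Field U]

theorem subfield_inclusion_injective {E₁ E₂ : Subfield U} (h : E₁ ≤ E₂) :
    Function.Injective (Subfield.inclusion h) := fun y z hyz => by
  have h2 := congrArg (fun t : ↥E₂ => (t : U)) hyz
  exact Subtype.ext h2

theorem isAlg_mono {E₁ E₂ : Subfield U} (h : E₁ ≤ E₂) {x : U}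
    (hx : IsAlgebraic ↥E₁ x) : IsAlgebraic ↥E₂ x := by
  obtain ⟨p, hp, hpx⟩ := hx
  refine ⟨p.map (Subfield.inclusion h),
    (Polynomial.map_ne_zero_iff (subfield_inclusion_injective h)).mpr hp, ?_⟩
  rw [aeval_def, eval₂_map]
  have : (algebraMap ↥E₂ U).comp (Subfield.inclusion h : ↥E₁ →+* ↥E₂) = algebraMap ↥E₁ U :=
    RingHom.ext fun y => rfl
  rw [this, ← aeval_def]
  exact hpx

theorem isAlg_sigma {E : Subfield U} (σ : U ≃+* U) (hE : E.map (σ : U →+* U) = E)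
    {x : U} (hx : IsAlgebraic ↥E x) : IsAlgebraic ↥E (σ x) := by
  obtain ⟨p, hp, hpx⟩ := hx
  have hmem : ∀ y : ↥E, ((σ : U →+* U).comp E.subtype) y ∈ E := fun y => by
    have : σ y.1 ∈ Subfield.map (σ : U →+* U) E := ⟨y.1, y.2, rfl⟩
    rw [hE] at this
    exact this
  let φ : ↥E →+* ↥E := ((σ : U →+* U).comp E.subtype).codRestrict E.toSubring hmem
  have hinj : Function.Injective φ := fun y z hyz => by
    have h2 := congrArg (fun t : ↥E => (t : U)) hyz
    exact Subtype.ext (σ.injective h2)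
  refine ⟨p.map φ, (Polynomial.map_ne_zero_iff hinj).mpr hp, ?_⟩
  rw [aeval_def, eval₂_map]
  have hcomp : (algebraMap ↥E U).comp φ = (σ : U →+* U).comp (algebraMap ↥E U) :=
    RingHom.ext fun y => rfl
  show eval₂ _ ((σ : U →+* U) x) _ = 0
  rw [hcomp, ← Polynomial.hom_eval₂, ← aeval_def, hpx, map_zero]

theorem eq_of_fieldDeg_one {Ω : Type*} [Field Ω] {E F : Subfield Ω}
    (h1 : fieldDeg E F = 1) : E = F := by
  rw [fieldDeg] at h1
  split_ifs at h1 with h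
  · letI := (Subfield.inclusion h).toAlgebra
    have hbt := Subalgebra.bot_eq_top_of_finrank_eq_one h1
    refine le_antisymm h fun x hx => ?_
    have hmem : (⟨x, hx⟩ : ↥F) ∈ (⊤ : Subalgebra ↥E ↥F) := trivial
    rw [← hbt, Algebra.mem_bot] at hmem
    obtain ⟨y, hy⟩ := hmem
    have : (y : Ω) = x := congrArg Subtype.val hy
    exact this ▸ y.2

theorem fieldFinite_of_intermediate {U : Type*} [Field U] {E : Subfield U}
    (T' : IntermediateField ↥E U) (hfd : FiniteDimensional ↥E ↥T') {T : Subfield U}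
    (hT : T'.toSubfield = T) : fieldFinite E T := by
  subst hT
  have h : E ≤ T'.toSubfield := fun x hx => T'.algebraMap_mem ⟨x, hx⟩
  refine ⟨h, ?_⟩
  letI := (Subfield.inclusion h).toAlgebra
  let e : ↥T' ≃ₗ[↥E] ↥T'.toSubfield :=
    { toFun := fun x => ⟨x.1, x.2⟩
      invFun := fun x => ⟨x.1, x.2⟩
      map_add' := fun _ _ => rfl
      map_smul' := fun c x => rfl
      left_inv := fun _ => rfl
      right_inv := fun _ => rfl }
  exact Module.Finite.equiv e

theorem fullField_map_sigma {U : Type*} [Field U] (σ : U ≃+* U) (K : Subfield U)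
    (hK : K.map (σ : U →+* U) = K) {n : ℕ} (c : Fin n → U) :
    (fullField K σ c).map (σ : U →+* U) = fullField K σ c := by
  rw [fullField, RingHom.map_field_closure]
  apply le_antisymm
  · rw [Subfield.closure_le]
    rintro x ⟨y, hy, rfl⟩
    rcases hy with hy | ⟨j, i, rfl | rfl⟩
    · refine Subfield.subset_closure (Or.inl ?_)
      have : σ y ∈ K.map (σ : U →+* U) := ⟨y, hy, rfl⟩
      rwa [hK] at this
    · refine Subfield.subset_closure (Or.inr ⟨j + 1, i, Or.inl ?_⟩)
      rw [Function.iterate_succ_apply']; rfl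
    · cases j with
      | zero =>
        exact Subfield.subset_closure (Or.inr ⟨1, i, Or.inl rfl⟩)
      | succ k =>
        refine Subfield.subset_closure (Or.inr ⟨k, i, Or.inr ?_⟩)
        show (σ : U →+* U) ((⇑σ.symm)^[k+1] (c i)) = _
        rw [Function.iterate_succ_apply']
        show σ (σ.symm _) = _
        rw [RingEquiv.apply_symm_apply]
  · rw [Subfield.closure_le]
    rintro x (hx | ⟨j, i, rfl | rfl⟩)
    · rw [← hK] at hx
      obtain ⟨y, hy, rfl⟩ := hx
      exact Subfield.subset_closure ⟨y, Or.inl hy, rfl⟩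
    · cases j with
      | zero =>
        refine Subfield.subset_closure ⟨(⇑σ.symm)^[1] (c i), Or.inr ⟨1, i, Or.inr rfl⟩, ?_⟩
        simp
      | succ k =>
        refine Subfield.subset_closure ⟨(⇑σ)^[k] (c i), Or.inr ⟨k, i, Or.inl rfl⟩, ?_⟩
        rw [Function.iterate_succ_apply']; rfl
    · refine Subfield.subset_closure ⟨(⇑σ.symm)^[j + 1] (c i), Or.inr ⟨j + 1, i, Or.inr rfl⟩, ?_⟩
      show (σ : U →+* U) _ = _
      rw [Function.iterate_succ_apply']
      show σ (σ.symm _) = _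
      rw [RingEquiv.apply_symm_apply]

end Helpers

/-- Let `U` be a field with a ring automorphism `σ` and `K` a subfield with
`σ(K) = K`.  Let `a`, `b` be tuples with `σ(a)` algebraic over `K(a)`, `σ(b)` algebraic
over `K(b)`, and `b` algebraic over `K(a)`.  If `ld(b/K) = 1` then `K(a,b)_{σ^{±1}}`
is a finite extension of `K(a)_{σ^{±1}}`. -/
theorem finite_of_limit_degree_one {U : Type*} [Field U] (σ : U ≃+* U)
    (K : Subfield U) (hK : K.map (σ : U →+* U) = K) {n m : ℕ}
    (a : Fin n → U) (b : Fin m → U)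
    (haalg : ∀ i, IsAlgebraic ↥(segField K σ a 0) (σ (a i)))
    (hbalg : ∀ i, IsAlgebraic ↥(segField K σ b 0) (σ (b i)))
    (hba : ∀ i, IsAlgebraic ↥(segField K σ a 0) (b i))
    (hld : IsEventualValue (ldSeq K σ b) 1) :
    fieldFinite (fullField K σ a) (fullField K σ a ⊔ fullField K σ b) := by
  classical
  obtain ⟨N, hN⟩ := hld
  set E := fullField K σ a with hE
  have hEσ : E.map (σ : U →+* U) = E := fullField_map_sigma σ K hK a
  have hKE : (K : Set U) ⊆ (E : Set U) := fun x hx => Subfield.subset_closure (Or.inl hx)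
  have hseg0 : segField K σ a 0 ≤ E := by
    rw [segField, Subfield.closure_le]
    rintro x (hx | ⟨j, hj, i, rfl⟩)
    · exact hKE hx
    · exact Subfield.subset_closure (Or.inr ⟨j, i, Or.inl rfl⟩)
  have halg : ∀ (j : ℕ) (i : Fin m), IsAlgebraic ↥E ((⇑σ)^[j] (b i)) := by
    intro j i
    induction j with
    | zero => exact isAlg_mono hseg0 (hba i)
    | succ k ih => rw [Function.iterate_succ_apply']; exact isAlg_sigma σ hEσ ih
  set G : Set U := {x | ∃ j ≤ N, ∃ i, x = (⇑σ)^[j] (b i)} with hG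
  have hGfin : G.Finite := by
    have hsub : G ⊆ (fun p : Fin (N + 1) × Fin m => (⇑σ)^[(p.1 : ℕ)] (b p.2)) '' Set.univ := by
      rintro x ⟨j, hj, i, rfl⟩
      exact ⟨(⟨j, Nat.lt_succ_of_le hj⟩, i), trivial, rfl⟩
    exact ((Set.finite_univ).image _).subset hsub
  set T : Subfield U := Subfield.closure ((E : Set U) ∪ G) with hT
  have hET : E ≤ T := fun x hx => Subfield.subset_closure (Or.inl hx)
  have hGT : G ⊆ (T : Set U) := fun x hx => Subfield.subset_closure (Or.inr hx)
  have hsegN : segField K σ b N ≤ T := by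
    rw [segField, Subfield.closure_le]
    rintro x (hx | hx)
    · exact hET (hKE hx)
    · exact hGT hx
  have hsegeq : segField K σ b N = segField K σ b (N + 1) := eq_of_fieldDeg_one (hN N le_rfl)
  have hstep : ∀ j ≤ N, ∀ i, (⇑σ)^[j + 1] (b i) ∈ segField K σ b N := by
    intro j hj i
    rw [hsegeq]
    exact Subfield.subset_closure (Or.inr ⟨j + 1, Nat.succ_le_succ hj, i, rfl⟩)
  have hTσ : T.map (σ : U →+* U) ≤ T := by
    rw [hT, RingHom.map_field_closure, Subfield.closure_le]
    rintro x ⟨y, hy, rfl⟩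
    rcases hy with hy | ⟨j, hj, i, rfl⟩
    · refine hET ?_
      have : σ y ∈ E.map (σ : U →+* U) := ⟨y, hy, rfl⟩
      rwa [hEσ] at this
    · refine hsegN ?_
      have := hstep j hj i
      rwa [Function.iterate_succ_apply'] at this
  have halgG : ∀ x ∈ G, IsIntegral ↥E x := by
    rintro x ⟨j, hj, i, rfl⟩
    exact (halg j i).isIntegral
  let T' : IntermediateField ↥E U := T.toIntermediateField fun x => hET x.2
  have hT'adj : T' = IntermediateField.adjoin ↥E G := by
    apply le_antisymm
    · intro x hx
      have hx' : x ∈ T := hx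
      have hle : T ≤ (IntermediateField.adjoin ↥E G).toSubfield := by
        rw [hT, Subfield.closure_le]
        rintro y (hy | hy)
        · exact (IntermediateField.adjoin ↥E G).algebraMap_mem ⟨y, hy⟩
        · exact IntermediateField.subset_adjoin ↥E G hy
      exact hle hx'
    · rw [IntermediateField.adjoin_le_iff]
      exact fun x hx => hGT hx
  have hfd : FiniteDimensional ↥E ↥T' := by
    rw [hT'adj]
    haveI := hGfin.to_subtype
    exact IntermediateField.finiteDimensional_adjoin halgG
  -- σ(T) = T via dimension count
  have hET2 : E ≤ T.map (σ : U →+* U) := by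
    intro x hx
    rw [← hEσ] at hx
    obtain ⟨y, hy, rfl⟩ := hx
    exact ⟨y, hET hy, rfl⟩
  let T₂ : Subfield U := T.map (σ : U →+* U)
  let T₂' : IntermediateField ↥E U := T₂.toIntermediateField fun x => hET2 x.2
  have hle' : T₂' ≤ T' := fun x hx => hTσ hx
  let iE : ↥E ≃+* ↥E :=
    { toFun := fun y => ⟨σ y.1, by
        have : σ y.1 ∈ E.map (σ : U →+* U) := ⟨y.1, y.2, rfl⟩
        rwa [hEσ] at this⟩
      invFun := fun y => ⟨σ.symm y.1, by
        have hy : (y : U) ∈ E.map (σ : U →+* U) := by rw [hEσ]; exact y.2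
        obtain ⟨z, hz, hze⟩ := hy
        have : σ.symm (y : U) = z := by
          rw [← hze]; exact σ.symm_apply_apply z
        rwa [this]⟩
      left_inv := fun y => Subtype.ext (σ.symm_apply_apply y.1)
      right_inv := fun y => Subtype.ext (σ.apply_symm_apply y.1)
      map_mul' := fun y z => Subtype.ext (map_mul σ y.1 z.1)
      map_add' := fun y z => Subtype.ext (map_add σ y.1 z.1) }
  let jT : ↥T' ≃+* ↥T₂' :=
    { toFun := fun y => ⟨σ y.1, ⟨y.1, y.2, rfl⟩⟩
      invFun := fun y => ⟨σ.symm y.1, by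
        obtain ⟨z, hz, hze⟩ := (y.2 : (y : U) ∈ T.map (σ : U →+* U))
        have : σ.symm (y : U) = z := by
          rw [← hze]; exact σ.symm_apply_apply z
        rwa [this]⟩
      left_inv := fun y => Subtype.ext (σ.symm_apply_apply y.1)
      right_inv := fun y => Subtype.ext (σ.apply_symm_apply y.1)
      map_mul' := fun y z => Subtype.ext (map_mul σ y.1 z.1)
      map_add' := fun y z => Subtype.ext (map_add σ y.1 z.1) }
  have hrank : Module.rank ↥E ↥T' = Module.rank ↥E ↥T₂' :=
    Algebra.rank_eq_of_equiv_equiv iE jT (RingHom.ext fun y => Subtype.ext rfl)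
  have hfr : Module.finrank ↥E ↥T₂' = Module.finrank ↥E ↥T' := by
    unfold Module.finrank
    rw [hrank]
  have heq : T₂' = T' := IntermediateField.eq_of_le_of_finrank_le hle' hfr.ge
  have hT2T : T₂ = T := by
    apply SetLike.ext
    intro x
    constructor
    · intro hx
      have h2 : x ∈ T₂' := hx
      rw [heq] at h2
      exact h2
    · intro hx
      have h2 : x ∈ T' := hx
      rw [← heq] at h2
      exact h2
  have hσT : ∀ x ∈ T, σ x ∈ T := by
    intro x hx
    have : σ x ∈ T₂ := ⟨x, hx, rfl⟩
    rwa [hT2T] at this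
  have hσsymmT : ∀ x ∈ T, σ.symm x ∈ T := by
    intro x hx
    rw [← hT2T] at hx
    obtain ⟨y, hy, rfl⟩ := hx
    have : σ.symm ((σ : U →+* U) y) = y := σ.symm_apply_apply y
    rwa [this]
  have hbT : ∀ (j : ℕ) (i : Fin m), (⇑σ)^[j] (b i) ∈ T ∧ (⇑σ.symm)^[j] (b i) ∈ T := by
    intro j i
    induction j with
    | zero => exact ⟨hGT ⟨0, Nat.zero_le N, i, rfl⟩, hGT ⟨0, Nat.zero_le N, i, rfl⟩⟩
    | succ k ih =>
      constructor
      · rw [Function.iterate_succ_apply']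
        exact hσT _ ih.1
      · rw [Function.iterate_succ_apply']
        exact hσsymmT _ ih.2
  have hfb : fullField K σ b ≤ T := by
    rw [fullField, Subfield.closure_le]
    rintro x (hx | ⟨j, i, rfl | rfl⟩)
    · exact hET (hKE hx)
    · exact (hbT j i).1
    · exact (hbT j i).2
  have hsup : fullField K σ a ⊔ fullField K σ b = T := by
    apply le_antisymm
    · exact sup_le hET hfb
    · rw [hT, Subfield.closure_le]
      rintro x (hx | ⟨j, hj, i, rfl⟩)
      · exact SetLike.le_def.mp le_sup_left hx
      · exact SetLike.le_def.mp le_sup_right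
          (Subfield.subset_closure (Or.inr ⟨j, i, Or.inl rfl⟩))
  rw [hsup]
  exact fieldFinite_of_intermediate T' hfd (by apply SetLike.ext; intro x; exact Iff.rfl)
end

section
/- Let Ω be a field of characteristic p > 0 and let a, b, t be elements of Ω that are algebraically independent over the prime field F_p. Let K = F_p(a^p, b^p, t, a+bt) be the subfield of Ω generated by a^p, b^p, t and a+bt. Then a ∉ K. -/
open MvPolynomial

variable (p : ℕ) [Fact p.Prime]

noncomputable def vp : Fin 4 → MvPolynomial (Fin 3) (ZMod p) :=
  ![(X 0) ^ p, (X 1) ^ p, X 2, X 0 + X 1 * X 2]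

noncomputable def phi : MvPolynomial (Fin 4) (ZMod p) →ₐ[ZMod p] MvPolynomial (Fin 3) (ZMod p) :=
  aeval (vp p)

lemma pderiv_vp (i : Fin 3) (hi : i ≠ 2) (j : Fin 4) :
    pderiv i (vp p j) = (if j = 3 then (if i = 0 then 1 else X 2) else 0) := by
  have hp : ((p : ℕ) : MvPolynomial (Fin 3) (ZMod p)) = 0 := by
    exact_mod_cast CharP.cast_eq_zero (MvPolynomial (Fin 3) (ZMod p)) p
  fin_cases j <;> fin_cases i <;> simp_all [vp, pderiv_pow, pderiv_X, hp]

lemma chain (i : Fin 3) (hi : i ≠ 2) (F : MvPolynomial (Fin 4) (ZMod p)) :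
    pderiv i (phi p F) = phi p (pderiv 3 F) * (if i = 0 then 1 else X 2) := by
  induction F using MvPolynomial.induction_on with
  | C c => simp [phi]
  | add f g hf hg => simp only [map_add, hf, hg, add_mul]
  | mul_X f j hf =>
      rw [map_mul, pderiv_mul, hf, pderiv_mul, map_add, map_mul, map_mul]
      have h1 : phi p (X j) = vp p j := aeval_X _ _
      have h2 : pderiv i (vp p j) = (if j = 3 then (if i = 0 then 1 else X 2) else 0) :=
        pderiv_vp p i hi j
      have h3 : (pderiv (3 : Fin 4)) (X j) = if j = 3 then (1 : MvPolynomial (Fin 4) (ZMod p)) else 0 := by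
        rw [pderiv_X, Pi.single_apply]
      rw [h1, h2, h3]
      by_cases hj : j = 3 <;> by_cases hi0 : i = 0 <;> simp [hj, hi0] <;> ring

lemma key (F G : MvPolynomial (Fin 4) (ZMod p)) (h : X 0 * phi p G = phi p F) :
    phi p G = 0 := by
  have h0 := congrArg (pderiv (0 : Fin 3)) h
  have h1 := congrArg (pderiv (1 : Fin 3)) h
  rw [pderiv_mul, chain p 0 (by decide) G, chain p 0 (by decide) F] at h0
  rw [pderiv_mul, chain p 1 (by decide) G, chain p 1 (by decide) F] at h1
  simp only [if_pos, if_neg, pderiv_X, Pi.single_apply, mul_one] at h0 h1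
  simp [Pi.single_apply, Fin.ext_iff] at h0 h1
  -- cancel X 2 in h1
  have h1' : X 0 * phi p (pderiv 3 G) = phi p (pderiv 3 F) := by
    have hX2 : (X 2 : MvPolynomial (Fin 3) (ZMod p)) ≠ 0 := X_ne_zero 2
    have := h1
    apply mul_right_cancel₀ hX2
    linear_combination this
  have : phi p G = 0 := by linear_combination h0 - h1'
  exact this


/-- Let `Ω` be a field of characteristic `p > 0` and `a, b, t ∈ Ω` algebraically
independent over the prime field `𝔽_p`.  Then `a` does not belong to the subfield
`K = 𝔽_p(aᵖ, bᵖ, t, a + bt)` generated by `aᵖ, bᵖ, t` and `a + bt`. -/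
theorem not_mem_field_of_definition_example (p : ℕ) [Fact p.Prime]
    {Ω : Type*} [Field Ω] [CharP Ω p] [Algebra (ZMod p) Ω]
    (a b t : Ω) (hind : AlgebraicIndependent (ZMod p) ![a, b, t]) :
    a ∉ Subfield.closure {a ^ p, b ^ p, t, a + b * t} := by
  intro ha
  have hinj : Function.Injective (aeval (R := ZMod p) ![a, b, t]) :=
    algebraicIndependent_iff_injective_aeval.mp hind
  set w : Fin 3 → Ω := ![a, b, t] with hw
  set vΩ : Fin 4 → Ω := ![a ^ p, b ^ p, t, a + b * t] with hv
  have ha0 : a ≠ 0 := by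
    intro h
    have : (X 0 : MvPolynomial (Fin 3) (ZMod p)) = 0 := hinj (by simp [w, h])
    exact X_ne_zero 0 this
  have hsub : a ∈ IntermediateField.adjoin (ZMod p) (Set.range vΩ) := by
    refine Subfield.closure_le.mpr ?_ ha
    intro x hx
    apply IntermediateField.subset_adjoin
    simp only [Set.mem_insert_iff, Set.mem_singleton_iff] at hx
    rcases hx with rfl | rfl | rfl | rfl
    · exact ⟨0, by simp [vΩ]⟩
    · exact ⟨1, by simp [vΩ]⟩
    · exact ⟨2, by simp [vΩ]⟩
    · exact ⟨3, by simp [vΩ]⟩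
  obtain ⟨F, G, hFG⟩ := (IntermediateField.mem_adjoin_range_iff (ZMod p) vΩ a).mp hsub
  have hcomp : ∀ (H : MvPolynomial (Fin 4) (ZMod p)), aeval vΩ H = aeval w (phi p H) := by
    intro H
    have h2 : (fun i => aeval w (vp p i)) = vΩ := by
      funext i
      fin_cases i <;> simp [vp, w, vΩ]
    calc aeval vΩ H = aeval (fun i => aeval w (vp p i)) H := by rw [h2]
      _ = aeval w (aeval (vp p) H) := (comp_aeval_apply (f := vp p) (aeval w) H).symm
  have hG : aeval vΩ G ≠ 0 := by
    intro h
    rw [h, div_zero] at hFG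
    exact ha0 hFG
  have heq : aeval w (X 0 * phi p G) = aeval w (phi p F) := by
    rw [map_mul, ← hcomp, ← hcomp]
    have : a * aeval vΩ G = aeval vΩ F := by
      field_simp at hFG
      rw [hFG]
    simpa [w] using this
  have hpoly : X 0 * phi p G = phi p F := hinj heq
  have := key p F G hpoly
  rw [hcomp] at hG
  exact hG (by rw [this, map_zero])
end

section
/- Let L₀ be a field of characteristic p > 0 with [L₀ : L₀^p] = p, where L₀^p is the image of L₀ under the Frobenius map x ↦ x^p, and let L be a purely inseparable algebraic field extension of L₀ with L ≠ L₀. Then L contains L₀^{1/p}, the set of all elements x (in a fixed algebraic closure containing L) with x^p ∈ L₀; in other words, every element of an algebraic closure of L whose p-th power lies in L₀ already lies in L. -/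
set_option maxHeartbeats 2000000 in
set_option synthInstance.maxHeartbeats 400000 in
/-- Let `L₀` be a field of characteristic `p > 0` with `[L₀ : L₀ᵖ] = p`, and let `L`
be a purely inseparable field extension of `L₀` with `L ≠ L₀`.  Then every element of
an algebraic closure of `L` whose `p`-th power lies in `L₀` already lies in `L`
(i.e. `L ⊇ L₀^{1/p}`). -/
theorem pth_root_mem_of_purelyInseparable (p : ℕ) [Fact p.Prime]
    {L₀ L : Type*} [Field L₀] [Field L] [Algebra L₀ L] [CharP L₀ p] [CharP L p]
    (hdeg : Module.finrank ↥((frobenius L₀ p).fieldRange) L₀ = p)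
    [IsPurelyInseparable L₀ L]
    (hne : ¬ Function.Surjective (algebraMap L₀ L))
    (x : AlgebraicClosure L)
    (hx : x ^ p ∈ Set.range (⇑(algebraMap L (AlgebraicClosure L)) ∘ ⇑(algebraMap L₀ L))) :
    x ∈ Set.range (algebraMap L (AlgebraicClosure L)) := by
  classical
  have hp : p.Prime := Fact.out
  set f := algebraMap L₀ L
  set F := (frobenius L₀ p).fieldRange
  -- find y ∈ L \ range f with y ^ p ∈ range f
  obtain ⟨y₀, hy₀⟩ := not_forall.mp hne
  have hpow : ∃ n : ℕ, y₀ ^ p ^ n ∈ (f : L₀ →+* L).range := by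
    haveI : ExpChar L₀ p := ExpChar.prime hp
    exact IsPurelyInseparable.pow_mem L₀ p y₀
  have hnspec := Nat.find_spec hpow
  have hn0 : Nat.find hpow ≠ 0 := by
    intro h
    rw [h] at hnspec
    simp only [pow_zero, pow_one] at hnspec
    obtain ⟨c, hc⟩ := hnspec
    exact hy₀ ⟨c, hc⟩
  set y := y₀ ^ p ^ (Nat.find hpow - 1) with hy
  have hyp : y ^ p ∈ (f : L₀ →+* L).range := by
    rw [hy, ← pow_mul, ← pow_succ, Nat.sub_add_cancel (Nat.one_le_iff_ne_zero.mpr hn0)]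
    exact hnspec
  have hynot : y ∉ (f : L₀ →+* L).range := by
    intro h
    exact Nat.find_min hpow (Nat.sub_lt (Nat.pos_of_ne_zero hn0) one_pos) h
  obtain ⟨a, ha⟩ := hyp
  -- the subfield S of L₀ of elements whose image in L has a p-th root
  set S : Subfield L₀ := Subfield.comap f (frobenius L p).fieldRange with hS
  have hFS : ∀ c : ↥F, algebraMap ↥F L₀ c ∈ S := by
    rintro ⟨_, c, rfl⟩
    refine ⟨f c, ?_⟩
    show f c ^ p = f ((frobenius L₀ p) c)
    rw [frobenius_def, map_pow]
  set S' : IntermediateField ↥F L₀ := S.toIntermediateField hFS with hS'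
  have haS : a ∈ S' := ⟨y, by rw [frobenius_def, ha]⟩
  have haF : a ∉ F := by
    rintro ⟨c, rfl⟩
    apply hynot
    refine ⟨c, ?_⟩
    have : (f c) ^ p = y ^ p := by rw [← ha]; simp [frobenius_def, map_pow]
    exact frobenius_inj L p (by simpa [frobenius_def] using this)
  haveI : FiniteDimensional ↥F L₀ :=
    FiniteDimensional.of_finrank_pos (by rw [hdeg]; exact hp.pos)
  -- S' = ⊤
  have hdvd : Module.finrank ↥F ↥S' ∣ p := by
    rw [← hdeg]
    exact ⟨Module.finrank ↥S' L₀, (Module.finrank_mul_finrank ↥F ↥S' L₀).symm⟩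
  have hne1 : Module.finrank ↥F ↥S' ≠ 1 := by
    intro h
    rw [IntermediateField.finrank_eq_one_iff] at h
    rw [h] at haS
    obtain ⟨c, hc⟩ := IntermediateField.mem_bot.mp haS
    exact haF (hc ▸ c.2)
  have hfr : Module.finrank ↥F ↥S' = p :=
    (hp.eq_one_or_self_of_dvd _ hdvd).resolve_left hne1
  have hS1 : Module.finrank ↥S' L₀ = 1 := by
    have htow := Module.finrank_mul_finrank ↥F ↥S' L₀
    rw [hfr, hdeg] at htow
    have : p * Module.finrank ↥S' L₀ = p * 1 := by rw [mul_one, htow]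
    exact mul_left_cancel₀ hp.pos.ne' this
  have hStop : S' = ⊤ := by
    refine IntermediateField.eq_of_le_of_finrank_le' le_top ?_
    rw [hS1]
    exact Module.finrank_pos
  -- conclude
  obtain ⟨b, hb⟩ := hx
  have hbS : b ∈ S := by
    have : b ∈ S' := hStop ▸ IntermediateField.mem_top
    exact this
  obtain ⟨z, hz⟩ := hbS
  refine ⟨z, ?_⟩
  have : (algebraMap L (AlgebraicClosure L) z) ^ p = x ^ p := by
    rw [← hb]
    show (algebraMap L (AlgebraicClosure L) z) ^ p = algebraMap L (AlgebraicClosure L) (f b)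
    rw [← hz, frobenius_def, map_pow]
  have hMchar : CharP (AlgebraicClosure L) p :=
    charP_of_injective_algebraMap (algebraMap L (AlgebraicClosure L)).injective p
  exact frobenius_inj (AlgebraicClosure L) p (by simpa [frobenius_def] using this)
end
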